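/- Let H ∈ ℝ^{N×N} be symmetric positive definite, let D̃ ∈ ℝ^{N×N}, let d_ℓ, d_r ∈ ℝ^N, and suppose the borrowing property D̃ᵀ H D̃ = h γ (d_r d_rᵀ + d_ℓ d_ℓᵀ) + M̃ holds, where h, γ > 0 and M̃ ∈ ℝ^{N×N} is symmetric positive semidefinite. With H_Ω = H ⊗ H, M̃_x = M̃ ⊗ H, M̃_y = H ⊗ M̃, and d_W = −d_ℓ ⊗ I, d_E = d_r ⊗ I, d_S = −I ⊗ d_ℓ, d_N = I ⊗ d_r, it holds for all f, g ∈ ℂ^{N²} that (D̃⊗I f)* H_Ω (D̃⊗I g) + (I⊗D̃ f)* H_Ω (I⊗D̃ g) = f*(M̃_x + M̃_y) g + h γ Σ_{α ∈ {W,S,E,N}} (d_αᵀ f)* H (d_αᵀ g); in particular M̃_x + M̃_y is symmetric positive semidefinite. -/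

import Mathlib

open Matrix Kronecker

/-- Complexification of a real matrix. -/
def cm {m n : Type*} (A : Matrix m n ℝ) : Matrix m n ℂ := A.map (fun r => (r : ℂ))

/-- The Kronecker product `v ⊗ I` of a column vector `v ∈ ℝ^N` with the `N×N` identity,
an `N² × N` matrix. -/
def kronL {N : ℕ} (v : Fin N → ℝ) : Matrix (Fin N × Fin N) (Fin N) ℝ :=
  fun p k => v p.1 * (if p.2 = k then 1 else 0)

/-- The Kronecker product `I ⊗ v` of the `N×N` identity with a column vector `v ∈ ℝ^N`,
an `N² × N` matrix. -/
def kronR {N : ℕ} (v : Fin N → ℝ) : Matrix (Fin N × Fin N) (Fin N) ℝ :=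
  fun p k => (if p.1 = k then 1 else 0) * v p.2

lemma cm_mul {m n p : Type*} [Fintype n] (A : Matrix m n ℝ) (B : Matrix n p ℝ) :
    cm (A * B) = cm A * cm B := by
  show (A * B).map (Complex.ofRealHom : ℝ →+* ℂ) = _
  rw [Matrix.map_mul]; rfl

lemma cm_add {m n : Type*} (A B : Matrix m n ℝ) : cm (A + B) = cm A + cm B := by
  ext i j; simp [cm]

lemma cm_smul {m n : Type*} (c : ℝ) (A : Matrix m n ℝ) : cm (c • A) = (c : ℂ) • cm A := by
  ext i j; simp [cm]

lemma cm_conjT {m n : Type*} (A : Matrix m n ℝ) : (cm A)ᴴ = cm Aᵀ := by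
  ext i j; simp [cm, conjTranspose_apply]

lemma cm_transpose {m n : Type*} (A : Matrix m n ℝ) : (cm A)ᵀ = cm Aᵀ := by
  ext i j; simp [cm]

lemma quad {m n : Type*} [Fintype m] [Fintype n] (M : Matrix m n ℂ) (B : Matrix m m ℂ)
    (f g : n → ℂ) :
    star (M *ᵥ f) ⬝ᵥ B *ᵥ (M *ᵥ g) = star f ⬝ᵥ (Mᴴ * B * M) *ᵥ g := by
  simp [star_mulVec, dotProduct_mulVec, vecMul_vecMul, Matrix.mul_assoc]

lemma realCT {m n : Type*} (A : Matrix m n ℝ) : Aᴴ = Aᵀ := by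
  ext i j; simp [conjTranspose_apply]

lemma kronL_quad {N : ℕ} (v : Fin N → ℝ) (H : Matrix (Fin N) (Fin N) ℝ) :
    kronL v * H * (kronL v)ᵀ = vecMulVec v v ⊗ₖ H := by
  ext p q
  simp [Matrix.mul_apply, kronL, vecMulVec, mul_ite, ite_mul, Finset.mul_sum]
  ring

lemma kronR_quad {N : ℕ} (v : Fin N → ℝ) (H : Matrix (Fin N) (Fin N) ℝ) :
    kronR v * H * (kronR v)ᵀ = H ⊗ₖ vecMulVec v v := by
  ext p q
  simp [Matrix.mul_apply, kronR, vecMulVec, mul_ite, ite_mul, Finset.mul_sum]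
  ring

lemma kronL_neg {N : ℕ} (v : Fin N → ℝ) : kronL (-v) = -(kronL v) := by
  ext p k; simp only [kronL, Matrix.neg_apply, Pi.neg_apply]; split_ifs <;> ring

lemma kronR_neg {N : ℕ} (v : Fin N → ℝ) : kronR (-v) = -(kronR v) := by
  ext p k; simp only [kronR, Matrix.neg_apply, Pi.neg_apply]; split_ifs <;> ring

lemma kron_sandwich_left {N : ℕ} (Dt H : Matrix (Fin N) (Fin N) ℝ) :
    (Dt ⊗ₖ (1 : Matrix (Fin N) (Fin N) ℝ))ᵀ * (H ⊗ₖ H) * (Dt ⊗ₖ 1)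
      = (Dtᵀ * H * Dt) ⊗ₖ H := by
  rw [← kroneckerMap_transpose, transpose_one, ← mul_kronecker_mul, ← mul_kronecker_mul,
    one_mul, mul_one]

lemma kron_sandwich_right {N : ℕ} (Dt H : Matrix (Fin N) (Fin N) ℝ) :
    ((1 : Matrix (Fin N) (Fin N) ℝ) ⊗ₖ Dt)ᵀ * (H ⊗ₖ H) * (1 ⊗ₖ Dt)
      = H ⊗ₖ (Dtᵀ * H * Dt) := by
  rw [← kroneckerMap_transpose, transpose_one, ← mul_kronecker_mul, ← mul_kronecker_mul,
    one_mul, mul_one]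

/-- The two-dimensional version of the borrowing decomposition: if
`D̃ᵀ H D̃ = h γ (d_r d_rᵀ + d_ℓ d_ℓᵀ) + M̃` with `M̃` symmetric positive semidefinite, then
`(D̃⊗I f)* H_Ω (D̃⊗I g) + (I⊗D̃ f)* H_Ω (I⊗D̃ g)
  = f*(M̃_x + M̃_y) g + h γ Σ_{α∈{W,S,E,N}} (d_αᵀ f)* H (d_αᵀ g)`
for all `f, g ∈ ℂ^{N²}`, where `H_Ω = H ⊗ H`, `M̃_x = M̃ ⊗ H`, `M̃_y = H ⊗ M̃`,
`d_W = −d_ℓ ⊗ I`, `d_E = d_r ⊗ I`, `d_S = −I ⊗ d_ℓ`, `d_N = I ⊗ d_r`;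
in particular `M̃_x + M̃_y` is symmetric positive semidefinite. -/
theorem stmt6 {N : ℕ}
    (H : Matrix (Fin N) (Fin N) ℝ) (hH : H.PosDef) (hHsymm : H.IsSymm)
    (Dt : Matrix (Fin N) (Fin N) ℝ)
    (dl dr : Fin N → ℝ)
    (h γ : ℝ) (hh : 0 < h) (hγ : 0 < γ)
    (Mt : Matrix (Fin N) (Fin N) ℝ) (hMt : Mt.PosSemidef)
    (hborrow : Dtᵀ * H * Dt = (h * γ) • (vecMulVec dr dr + vecMulVec dl dl) + Mt)
    (HΩ : Matrix (Fin N × Fin N) (Fin N × Fin N) ℝ) (hHΩ : HΩ = H ⊗ₖ H)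
    (Mx My : Matrix (Fin N × Fin N) (Fin N × Fin N) ℝ)
    (hMx : Mx = Mt ⊗ₖ H) (hMy : My = H ⊗ₖ Mt)
    (dW dE dS dN : Matrix (Fin N × Fin N) (Fin N) ℝ)
    (hdW : dW = kronL (-dl)) (hdE : dE = kronL dr) (hdS : dS = kronR (-dl)) (hdN : dN = kronR dr) :
    (∀ f g : Fin N × Fin N → ℂ,
      (star ((cm (Dt ⊗ₖ (1 : Matrix (Fin N) (Fin N) ℝ))) *ᵥ f) ⬝ᵥ
          (cm HΩ) *ᵥ ((cm (Dt ⊗ₖ (1 : Matrix (Fin N) (Fin N) ℝ))) *ᵥ g))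
      + (star ((cm ((1 : Matrix (Fin N) (Fin N) ℝ) ⊗ₖ Dt)) *ᵥ f) ⬝ᵥ
          (cm HΩ) *ᵥ ((cm ((1 : Matrix (Fin N) (Fin N) ℝ) ⊗ₖ Dt)) *ᵥ g)) =
      star f ⬝ᵥ (cm (Mx + My)) *ᵥ g
      + ((h * γ : ℝ) : ℂ) *
        ((star ((cm dW)ᵀ *ᵥ f) ⬝ᵥ (cm H) *ᵥ ((cm dW)ᵀ *ᵥ g))
          + (star ((cm dS)ᵀ *ᵥ f) ⬝ᵥ (cm H) *ᵥ ((cm dS)ᵀ *ᵥ g))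
          + (star ((cm dE)ᵀ *ᵥ f) ⬝ᵥ (cm H) *ᵥ ((cm dE)ᵀ *ᵥ g))
          + (star ((cm dN)ᵀ *ᵥ f) ⬝ᵥ (cm H) *ᵥ ((cm dN)ᵀ *ᵥ g)))) ∧
    (Mx + My).PosSemidef := by
  subst hHΩ hMx hMy hdW hdE hdS hdN
  -- the key real-matrix identity
  have key : (Dt ⊗ₖ (1 : Matrix (Fin N) (Fin N) ℝ))ᵀ * (H ⊗ₖ H) * (Dt ⊗ₖ 1)
      + ((1 : Matrix (Fin N) (Fin N) ℝ) ⊗ₖ Dt)ᵀ * (H ⊗ₖ H) * (1 ⊗ₖ Dt)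
      = (Mt ⊗ₖ H + H ⊗ₖ Mt)
        + (h * γ) • (kronL (-dl) * H * (kronL (-dl))ᵀ + kronR (-dl) * H * (kronR (-dl))ᵀ
          + kronL dr * H * (kronL dr)ᵀ + kronR dr * H * (kronR dr)ᵀ) := by
    rw [kron_sandwich_left, kron_sandwich_right, hborrow, kronL_neg, kronR_neg]
    simp only [transpose_neg, Matrix.neg_mul, Matrix.mul_neg, neg_neg]
    rw [kronL_quad, kronR_quad, kronL_quad, kronR_quad,
      add_kronecker, kronecker_add, smul_kronecker, kronecker_smul,
      add_kronecker, kronecker_add]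
    simp only [smul_add]
    abel
  constructor
  · intro f g
    have comb : ∀ P Q : Matrix (Fin N × Fin N) (Fin N × Fin N) ℝ,
        star f ⬝ᵥ cm P *ᵥ g + star f ⬝ᵥ cm Q *ᵥ g = star f ⬝ᵥ cm (P + Q) *ᵥ g := by
      intro P Q; rw [cm_add, add_mulVec, dotProduct_add]
    have scal : ∀ (c : ℝ) (P : Matrix (Fin N × Fin N) (Fin N × Fin N) ℝ),
        (c : ℂ) * (star f ⬝ᵥ cm P *ᵥ g) = star f ⬝ᵥ cm (c • P) *ᵥ g := by
      intro c P; rw [cm_smul, smul_mulVec, dotProduct_smul, smul_eq_mul]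
    simp only [quad, cm_transpose, cm_conjT, transpose_transpose, ← cm_mul]
    rw [comb, comb, comb, comb, scal, comb, key]
  · obtain ⟨A, hA⟩ : ∃ A : Matrix (Fin N) (Fin N) ℝ, Mt = Aᴴ * A := by
      open scoped MatrixOrder in
      obtain ⟨A, hA⟩ := CStarAlgebra.nonneg_iff_eq_star_mul_self.mp hMt.nonneg
      exact ⟨A, hA⟩
    obtain ⟨B, hB⟩ : ∃ B : Matrix (Fin N) (Fin N) ℝ, H = Bᴴ * B := by
      open scoped MatrixOrder in
      obtain ⟨B, hB⟩ := CStarAlgebra.nonneg_iff_eq_star_mul_self.mp hH.posSemidef.nonneg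
      exact ⟨B, hB⟩
    have h1 : Mt ⊗ₖ H = (A ⊗ₖ B)ᴴ * (A ⊗ₖ B) := by
      rw [hA, hB]; simp only [realCT]
      rw [← kroneckerMap_transpose, mul_kronecker_mul]
    have h2 : H ⊗ₖ Mt = (B ⊗ₖ A)ᴴ * (B ⊗ₖ A) := by
      rw [hA, hB]; simp only [realCT]
      rw [← kroneckerMap_transpose, mul_kronecker_mul]
    exact (h1 ▸ Matrix.posSemidef_conjTranspose_mul_self (A ⊗ₖ B)).add
      (h2 ▸ Matrix.posSemidef_conjTranspose_mul_self (B ⊗ₖ A))
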